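/- Let n ≥ 1 be an integer and f_n : ℂ∖{0} → ℂ be defined by f_n(z) = (z/conj(z))ⁿ. Then for a positive integer r, the function f_n is proper r-harmonic (i.e. Δʳ f_n = 0 identically on ℂ∖{0} and Δ^{r−1} f_n does not vanish identically) if and only if r = n + 1. -/

import Mathlib

noncomputable section

/-- The Euclidean Laplacian on `ℂ ≅ ℝ²`:
`Δf(z) = ∂²f/∂x²(z) + ∂²f/∂y²(z)`, where the second partials are computed as second
derivatives along the coordinate directions. -/
def lapC (f : ℂ → ℂ) (z : ℂ) : ℂ :=
  deriv (deriv (fun t : ℝ => f (z + (t : ℂ)))) 0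
    + deriv (deriv (fun t : ℝ => f (z + (t : ℂ) * Complex.I))) 0

/-- The iterated Laplacian: `Δ⁰f = f`, `Δʳf = Δ(Δ^{r−1}f)`. -/
def lapIter : ℕ → (ℂ → ℂ) → (ℂ → ℂ)
  | 0, f => f
  | r + 1, f => lapC (lapIter r f)

open Filter Set in
lemma hda_affine_zpow (m : ℤ) (c d : ℂ) {w : ℂ} (h : c + d * w ≠ 0) :
    HasDerivAt (fun w : ℂ => (c + d * w) ^ m) ((m : ℂ) * (c + d * w) ^ (m - 1) * d) w := by
  have h1 : HasDerivAt (fun w : ℂ => c + d * w) d w := by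
    simpa using ((hasDerivAt_id w).const_mul d).const_add c
  have h2 := hasDerivAt_zpow m (c + d * w) (Or.inl h)
  exact h2.comp w h1

lemma second_deriv_ofReal {P P1 P2 : ℂ → ℂ} {s : Set ℂ} (hs : IsOpen s) (h0 : (0 : ℂ) ∈ s)
    (h1 : ∀ w ∈ s, HasDerivAt P (P1 w) w) (h2 : ∀ w ∈ s, HasDerivAt P1 (P2 w) w) :
    deriv (deriv (fun t : ℝ => P t)) 0 = P2 0 := by
  have hc : ContinuousAt (fun t : ℝ => (t : ℂ)) 0 := Complex.continuous_ofReal.continuousAt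
  have hmem : ∀ᶠ t : ℝ in nhds 0, ((t : ℂ)) ∈ s := by
    apply hc.eventually_mem
    rw [Complex.ofReal_zero]
    exact hs.mem_nhds h0
  have ev : deriv (fun t : ℝ => P t) =ᶠ[nhds (0:ℝ)] fun t : ℝ => P1 t :=
    hmem.mono fun t ht => ((h1 _ ht).comp_ofReal).deriv
  rw [ev.deriv_eq]
  exact ((h2 _ h0).comp_ofReal).deriv

lemma dir_second_deriv (a b : ℤ) {z q : ℂ} (d e : ℂ) (hz : z ≠ 0) (hq : q ≠ 0) :
    deriv (deriv (fun t : ℝ => (z + d * (t : ℂ)) ^ a * (q + e * (t : ℂ)) ^ b)) 0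
      = (a * (a - 1)) * z ^ (a - 2) * d ^ 2 * q ^ b
        + 2 * (a * b) * z ^ (a - 1) * q ^ (b - 1) * (d * e)
        + (b * (b - 1)) * z ^ a * q ^ (b - 2) * e ^ 2 := by
  set s : Set ℂ := {w | z + d * w ≠ 0 ∧ q + e * w ≠ 0} with hsdef
  have hs : IsOpen s := by
    have : s = ((fun w : ℂ => z + d * w) ⁻¹' {0}ᶜ) ∩ ((fun w : ℂ => q + e * w) ⁻¹' {0}ᶜ) := rfl
    rw [this]
    exact (isOpen_compl_singleton.preimage (by continuity)).inter
      (isOpen_compl_singleton.preimage (by continuity))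
  have h0 : (0 : ℂ) ∈ s := by simp [hsdef, hz, hq]
  have h1 : ∀ w ∈ s, HasDerivAt (fun w : ℂ => (z + d * w) ^ a * (q + e * w) ^ b)
      (((a : ℂ) * (z + d * w) ^ (a - 1) * d) * (q + e * w) ^ b
        + (z + d * w) ^ a * ((b : ℂ) * (q + e * w) ^ (b - 1) * e)) w := by
    intro w hw
    exact (hda_affine_zpow a z d hw.1).mul (hda_affine_zpow b q e hw.2)
  have h2 : ∀ w ∈ s, HasDerivAt (fun w : ℂ =>
      ((a : ℂ) * (z + d * w) ^ (a - 1) * d) * (q + e * w) ^ b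
        + (z + d * w) ^ a * ((b : ℂ) * (q + e * w) ^ (b - 1) * e))
      ((((a : ℂ) * ((a - 1 : ℤ) * (z + d * w) ^ (a - 1 - 1) * d)) * d) * (q + e * w) ^ b
        + ((a : ℂ) * (z + d * w) ^ (a - 1) * d) * ((b : ℂ) * (q + e * w) ^ (b - 1) * e)
        + (((a : ℂ) * (z + d * w) ^ (a - 1) * d) * ((b : ℂ) * (q + e * w) ^ (b - 1) * e)
          + (z + d * w) ^ a * (((b : ℂ) * ((b - 1 : ℤ) * (q + e * w) ^ (b - 1 - 1) * e)) * e))) w := by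
    intro w hw
    have t1 : HasDerivAt (fun w : ℂ => (a : ℂ) * (z + d * w) ^ (a - 1) * d)
        (((a : ℂ) * ((a - 1 : ℤ) * (z + d * w) ^ (a - 1 - 1) * d)) * d) w := by
      exact (((hda_affine_zpow (a - 1) z d hw.1).const_mul (a : ℂ)).mul_const d)
    have t2 : HasDerivAt (fun w : ℂ => (b : ℂ) * (q + e * w) ^ (b - 1) * e)
        (((b : ℂ) * ((b - 1 : ℤ) * (q + e * w) ^ (b - 1 - 1) * e)) * e) w := by
      exact (((hda_affine_zpow (b - 1) q e hw.2).const_mul (b : ℂ)).mul_const e)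
    exact (t1.mul (hda_affine_zpow b q e hw.2)).add ((hda_affine_zpow a z d hw.1).mul t2)
  have := second_deriv_ofReal hs h0 h1 h2
  rw [this]
  push_cast
  simp only [mul_zero, add_zero]
  ring_nf

lemma lap_zpow (a b : ℤ) {z : ℂ} (hz : z ≠ 0) :
    lapC (fun w => w ^ a * (starRingEnd ℂ w) ^ b) z
      = (4 * a * b) * (z ^ (a - 1) * (starRingEnd ℂ z) ^ (b - 1)) := by
  have hq : starRingEnd ℂ z ≠ 0 := by simpa using hz
  unfold lapC
  have e1 : (fun t : ℝ => (fun w => w ^ a * (starRingEnd ℂ w) ^ b) (z + (t : ℂ)))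
      = fun t : ℝ => (z + 1 * (t : ℂ)) ^ a * (starRingEnd ℂ z + 1 * (t : ℂ)) ^ b := by
    funext t
    simp [map_add, Complex.conj_ofReal]
  have e2 : (fun t : ℝ => (fun w => w ^ a * (starRingEnd ℂ w) ^ b) (z + (t : ℂ) * Complex.I))
      = fun t : ℝ => (z + Complex.I * (t : ℂ)) ^ a
          * (starRingEnd ℂ z + (-Complex.I) * (t : ℂ)) ^ b := by
    funext t
    simp only [map_add, map_mul, Complex.conj_ofReal, Complex.conj_I]
    ring_nf
  rw [e1, e2, dir_second_deriv a b 1 1 hz hq,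
    dir_second_deriv a b Complex.I (-Complex.I) hz hq]
  ring_nf
  simp only [Complex.I_sq]
  ring

lemma lapC_const_mul (c : ℂ) (g : ℂ → ℂ) (z : ℂ) :
    lapC (fun w => c * g w) z = c * lapC g z := by
  unfold lapC
  have h : ∀ v : ℝ → ℂ, deriv (deriv (fun t => c * v t)) 0 = c * deriv (deriv v) 0 := by
    intro v
    have hv : deriv (fun t => c * v t) = fun t => c * deriv v t :=
      funext fun t => deriv_const_mul_field c
    rw [hv]
    exact deriv_const_mul_field c
  rw [show (fun t : ℝ => (fun w => c * g w) (z + (t : ℂ))) = fun t : ℝ => c * g (z + (t : ℂ))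
      from rfl,
    show (fun t : ℝ => (fun w => c * g w) (z + (t : ℂ) * Complex.I))
      = fun t : ℝ => c * g (z + (t : ℂ) * Complex.I) from rfl,
    h, h]
  ring

lemma lapC_congr {f g : ℂ → ℂ} {s : Set ℂ} (hs : IsOpen s) (hfg : Set.EqOn f g s)
    {z : ℂ} (hz : z ∈ s) : lapC f z = lapC g z := by
  unfold lapC
  have hx : ∀ d : ℂ, deriv (deriv (fun t : ℝ => f (z + (t : ℂ) * d))) 0
      = deriv (deriv (fun t : ℝ => g (z + (t : ℂ) * d))) 0 := by
    intro d
    have hc : ContinuousAt (fun t : ℝ => z + (t : ℂ) * d) 0 := by fun_prop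
    have hmem : ∀ᶠ t : ℝ in nhds 0, z + (t : ℂ) * d ∈ s := by
      apply hc.eventually_mem
      simpa using hs.mem_nhds hz
    have ev : (fun t : ℝ => f (z + (t : ℂ) * d)) =ᶠ[nhds (0 : ℝ)]
        fun t : ℝ => g (z + (t : ℂ) * d) := hmem.mono fun t ht => hfg ht
    exact ev.deriv.deriv_eq
  have e1 : ∀ h : ℂ → ℂ, (fun t : ℝ => h (z + (t : ℂ)))
      = fun t : ℝ => h (z + (t : ℂ) * 1) := by
    intro h; funext t; rw [mul_one]
  rw [e1 f, e1 g, hx 1, hx Complex.I]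

def coefC (n : ℕ) : ℕ → ℂ
  | 0 => 1
  | k + 1 => (4 * ((n : ℂ) - k) * (-(n : ℂ) - k)) * coefC n k

lemma coefC_ne_zero (n : ℕ) (hn : 1 ≤ n) : ∀ k : ℕ, k ≤ n → coefC n k ≠ 0 := by
  intro k
  induction k with
  | zero => intro _; simp [coefC]
  | succ k ih =>
    intro hk
    have h1 : coefC n k ≠ 0 := ih (Nat.le_of_succ_le hk)
    have h2 : (n : ℂ) - k ≠ 0 := by
      have hne : (n : ℂ) ≠ (k : ℂ) := by
        exact_mod_cast Nat.ne_of_gt (Nat.lt_of_succ_le hk)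
      exact sub_ne_zero.mpr hne
    have h3 : -(n : ℂ) - k ≠ 0 := by
      have hnk : ((n + k : ℕ) : ℂ) ≠ 0 := Nat.cast_ne_zero.mpr (by omega)
      intro h
      apply hnk
      push_cast
      linear_combination -h
    show (4 * ((n : ℂ) - k) * (-(n : ℂ) - k)) * coefC n k ≠ 0
    exact mul_ne_zero (mul_ne_zero (mul_ne_zero (by norm_num) h2) h3) h1

lemma coefC_eq_zero (n : ℕ) : ∀ k : ℕ, n + 1 ≤ k → coefC n k = 0 := by
  intro k
  induction k with
  | zero => omega
  | succ k ih =>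
    intro hk
    show (4 * ((n : ℂ) - k) * (-(n : ℂ) - k)) * coefC n k = 0
    rcases Nat.lt_or_ge k (n + 1) with h | h
    · have hkn : k = n := by omega
      subst hkn
      simp
    · rw [ih h, mul_zero]

lemma iter_formula (n : ℕ) (k : ℕ) :
    Set.EqOn (lapIter k (fun w => (w / starRingEnd ℂ w) ^ n))
      (fun w => coefC n k * (w ^ ((n : ℤ) - k) * (starRingEnd ℂ w) ^ (-(n : ℤ) - k)))
      {z : ℂ | z ≠ 0} := by
  induction k with
  | zero =>
    intro z hz
    have hz' : z ≠ 0 := hz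
    have hq : starRingEnd ℂ z ≠ 0 := by simpa using hz'
    show (z / starRingEnd ℂ z) ^ n = coefC n 0 * (z ^ ((n : ℤ) - 0) * (starRingEnd ℂ z) ^ (-(n : ℤ) - 0))
    rw [div_pow]
    simp [coefC, zpow_natCast, zpow_neg, div_eq_mul_inv]
  | succ k ih =>
    intro z hz
    have hz' : z ≠ 0 := hz
    show lapC (lapIter k (fun w => (w / starRingEnd ℂ w) ^ n)) z = _
    rw [lapC_congr isOpen_ne ih hz]
    rw [show (fun w : ℂ => coefC n k * (w ^ ((n : ℤ) - k) * (starRingEnd ℂ w) ^ (-(n : ℤ) - k)))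
        = fun w : ℂ => coefC n k * ((fun w : ℂ => w ^ ((n : ℤ) - k) * (starRingEnd ℂ w) ^ (-(n : ℤ) - k)) w)
        from rfl]
    rw [lapC_const_mul, lap_zpow _ _ hz']
    show _ = (4 * ((n : ℂ) - k) * (-(n : ℂ) - k)) * coefC n k
        * (z ^ ((n : ℤ) - (k + 1)) * (starRingEnd ℂ z) ^ (-(n : ℤ) - (k + 1)))
    rw [show (n : ℤ) - k - 1 = (n : ℤ) - (k + 1) by ring,
      show -(n : ℤ) - k - 1 = -(n : ℤ) - (k + 1) by ring]
    push_cast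
    ring

/-- for `f_n(z) = (z/conj z)ⁿ` and a positive integer `r`, the function
`f_n` is proper `r`-harmonic on `ℂ∖{0}` (i.e. `Δʳf_n = 0` identically and `Δ^{r−1}f_n`
does not vanish identically) if and only if `r = n + 1`. -/
theorem proper_r_harmonic_z_div_conj_pow (n : ℕ) (hn : 1 ≤ n) (r : ℕ) (hr : 1 ≤ r) :
    ((∀ z : ℂ, z ≠ 0 → lapIter r (fun w => (w / starRingEnd ℂ w) ^ n) z = 0)
      ∧ ¬ (∀ z : ℂ, z ≠ 0 → lapIter (r - 1) (fun w => (w / starRingEnd ℂ w) ^ n) z = 0))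
      ↔ r = n + 1 := by
  constructor
  · rintro ⟨h1, h2⟩
    by_contra hne
    rcases Nat.lt_or_ge r (n + 1) with hlt | hge
    · have hr' : r ≤ n := by omega
      have h := h1 1 one_ne_zero
      rw [iter_formula n r (show (1 : ℂ) ∈ {z : ℂ | z ≠ 0} from one_ne_zero)] at h
      simp at h
      exact coefC_ne_zero n hn r hr' h
    · have hge2 : n + 1 ≤ r - 1 := by omega
      apply h2
      intro z hz
      rw [iter_formula n (r - 1) (show z ∈ {z : ℂ | z ≠ 0} from hz),
        coefC_eq_zero n (r - 1) hge2]
      simp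
  · rintro rfl
    refine ⟨?_, ?_⟩
    · intro z hz
      rw [iter_formula n (n + 1) (show z ∈ {z : ℂ | z ≠ 0} from hz),
        coefC_eq_zero n (n + 1) le_rfl]
      simp
    · intro h
      have h' := h 1 one_ne_zero
      rw [iter_formula n (n + 1 - 1) (show (1 : ℂ) ∈ {z : ℂ | z ≠ 0} from one_ne_zero)] at h'
      simp at h'
      exact coefC_ne_zero n hn n le_rfl h'

end
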